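/- Let T0 and T1 satisfy (C1) and (C2). Then K(T0,T1) = w_• · #leaves(T0) · #leaves(T1). Moreover, this is the minimal possible value of the kernel: for any two rooted trees S and T, K(S,T) ≥ w_• · #leaves(S) · #leaves(T). -/

import Mathlib

open scoped Classical

/-- Finite rooted trees: a tree is a root together with a list of child subtrees.
(For unordered trees, the list order is irrelevant; isomorphism is defined below.) -/
inductive RTree : Type where
  | node : List RTree → RTree

namespace RTree

/-- The list of root-child subtrees. -/
def children : RTree → List RTree
  | node cs => cs

/-- The subtree rooted at the vertex reached by the path `p` of child indices
(`none` if the path is invalid). -/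
def subAt : RTree → List ℕ → Option RTree
  | t, [] => some t
  | t, i :: p =>
    match (children t)[i]? with
    | some c => subAt c p
    | none => none
termination_by t p => p.length
decreasing_by simp

/-- Vertices of a tree are identified with the valid paths from the root. -/
def IsVertex (t : RTree) (p : List ℕ) : Prop := t.subAt p ≠ none

/-- The subtree `t[p]` rooted at the vertex `p`. -/
def subtreeAt (t : RTree) (p : List ℕ) : RTree := (t.subAt p).getD (node [])

/-- A leaf is a vertex with no children. -/
def IsLeafAt (t : RTree) (p : List ℕ) : Prop := t.IsVertex p ∧ ¬ t.IsVertex (p ++ [0])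

/-- The number of leaves of a tree. -/
noncomputable def leafCount (t : RTree) : ℕ := {p : List ℕ | t.IsLeafAt p}.ncard

/-- The height of a tree: the maximal length of a valid path. -/
noncomputable def height (t : RTree) : ℕ :=
  sSup {n : ℕ | ∃ p, t.IsVertex p ∧ p.length = n}

/-- The height of the vertex `p` in `t`, i.e. the height of the subtree `t[p]`. -/
noncomputable def heightAt (t : RTree) (p : List ℕ) : ℕ := (t.subtreeAt p).height

/-- Isomorphism of unordered rooted trees: a one-to-one correspondence between the
vertex sets mapping children to children. -/
def Iso (s t : RTree) : Prop :=
  ∃ f g : List ℕ → List ℕ,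
    (∀ p, s.IsVertex p → t.IsVertex (f p)) ∧
    (∀ q, t.IsVertex q → s.IsVertex (g q)) ∧
    (∀ p, s.IsVertex p → g (f p) = p) ∧
    (∀ q, t.IsVertex q → f (g q) = q) ∧
    (∀ p i, s.IsVertex (p ++ [i]) → ∃ j, f (p ++ [i]) = f p ++ [j])

/-- The isomorphism class of a tree. -/
def isoClass (s : RTree) : Set RTree := {t | s.Iso t}

/-- `S(T)`: the set of isomorphism classes of subtrees of `T`. -/
def classes (T : RTree) : Set (Set RTree) :=
  {C | ∃ p, T.IsVertex p ∧ C = isoClass (T.subtreeAt p)}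

/-- `N_C(T)`: the number of vertices of `T` whose subtree belongs to the class `C`. -/
noncomputable def classCount (C : Set RTree) (T : RTree) : ℕ :=
  {p : List ℕ | T.IsVertex p ∧ isoClass (T.subtreeAt p) = C}.ncard

/-- The subtree kernel `K(T1,T2) = Σ_{C ∈ S(T1) ∩ S(T2)} w_C · N_C(T1) · N_C(T2)`,
for a weight function `w` on isomorphism classes. -/
noncomputable def kernel (w : Set RTree → ℝ) (T1 T2 : RTree) : ℝ :=
  ∑' C : ↥(classes T1 ∩ classes T2),
    w (C : Set RTree) * (classCount (C : Set RTree) T1 : ℝ) * (classCount (C : Set RTree) T2 : ℝ)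

/-- The class of the single-vertex tree (the class of any leaf). -/
def leafClass : Set RTree := isoClass (node [])

/-- Condition (C1): within `T`, distinct non-leaf vertices root non-isomorphic subtrees. -/
def CondOne (T : RTree) : Prop :=
  ∀ p q, T.IsVertex p → T.IsVertex q → ¬ T.IsLeafAt p → ¬ T.IsLeafAt q → p ≠ q →
    ¬ Iso (T.subtreeAt p) (T.subtreeAt q)

/-- Condition (C2): no subtree of `T0` rooted at a non-leaf vertex is isomorphic to a
subtree of `T1` rooted at a non-leaf vertex. -/
def CondTwo (T0 T1 : RTree) : Prop :=
  ∀ p q, T0.IsVertex p → T1.IsVertex q → ¬ T0.IsLeafAt p → ¬ T1.IsLeafAt q →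
    ¬ Iso (T0.subtreeAt p) (T1.subtreeAt q)

/-- Replace, in `t`, the subtree rooted at the vertex `p` by `s`. -/
def replaceAt : RTree → List ℕ → RTree → RTree
  | _, [], s => s
  | node cs, i :: p, s => node (cs.set i (replaceAt (cs.getD i (node [])) p s))
termination_by t p s => p.length
decreasing_by simp

/-- `T^u = T(u ↦ τ_{H(u)})`: the tree `T` where the subtree rooted at `u` is replaced
by the tree of the same height in the sequence `τ`. -/
noncomputable def edit (T : RTree) (u : List ℕ) (τ : ℕ → RTree) : RTree :=
  T.replaceAt u (τ (T.heightAt u))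

/-- `des(u)`: the strict descendants of the vertex `u` in `T`. -/
def des (T : RTree) (u : List ℕ) : Set (List ℕ) :=
  {z | T.IsVertex z ∧ u <+: z ∧ z ≠ u}

/-- `fam(u)`: the vertex `u` together with its ancestors and descendants in `T`. -/
def fam (T : RTree) (u : List ℕ) : Set (List ℕ) :=
  {z | T.IsVertex z ∧ (z <+: u ∨ u <+: z)}

/-- Condition (C3): for `u ∈ T0`, `v ∈ T1`, subtrees of the edited trees `T0^u` and `T1^v`
rooted at non-leaf vertices outside the grafted copies are pairwise non-isomorphic. -/
def CondThree (T0 T1 : RTree) (τ : ℕ → RTree) : Prop :=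
  ∀ u v, T0.IsVertex u → T1.IsVertex v →
    ∀ p q, (edit T0 u τ).IsVertex p → ¬ u <+: p → ¬ (edit T0 u τ).IsLeafAt p →
      (edit T1 v τ).IsVertex q → ¬ v <+: q → ¬ (edit T1 v τ).IsLeafAt q →
      ¬ Iso ((edit T0 u τ).subtreeAt p) ((edit T1 v τ).subtreeAt q)

/-- The probability mass function of the binomial distribution `B(n,q)`. -/
noncomputable def binomPMF (n : ℕ) (q : ℝ) (k : ℕ) : ℝ :=
  (n.choose k : ℝ) * q ^ k * (1 - q) ^ (n - k)

/-- `c_h`: the number of vertices of height `h` in `T`. -/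
noncomputable def cAt (T : RTree) (h : ℕ) : ℕ :=
  {p : List ℕ | T.IsVertex p ∧ T.heightAt p = h}.ncard

/-- Expectation of `f(u)` where the vertex `u` of `T` is drawn according to the
random edit model: a height `h ~ B(H, ρ/H)`, then `u` uniform among vertices of height `h`. -/
noncomputable def editExp (T : RTree) (H : ℕ) (ρ : ℝ) (f : List ℕ → ℝ) : ℝ :=
  ∑ h ∈ Finset.range (H + 1), binomPMF H (ρ / H) h *
    ((∑' u : {p : List ℕ // T.IsVertex p ∧ T.heightAt p = h}, f u.1) / (cAt T h : ℝ))

/-- Expectation of `g(u,v)` for independent random-edit vertices `u` of `Ti` and `v` of `Tj`. -/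
noncomputable def editExp2 (Ti Tj : RTree) (H : ℕ) (ρ : ℝ) (g : List ℕ → List ℕ → ℝ) : ℝ :=
  ∑ h ∈ Finset.range (H + 1), ∑ h' ∈ Finset.range (H + 1),
    binomPMF H (ρ / H) h * binomPMF H (ρ / H) h' *
    ((∑' u : {p : List ℕ // Ti.IsVertex p ∧ Ti.heightAt p = h},
        ∑' v : {q : List ℕ // Tj.IsVertex q ∧ Tj.heightAt q = h'}, g u.1 v.1)
      / ((cAt Ti h : ℝ) * (cAt Tj h' : ℝ)))

/-- `Δ_x^i = E_{u,v}[K(T_i^x, T_i^u) − K(T_i^x, T_j^v)]` where `Ti, Tj` are the trees of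
classes `i` and `j = 1 − i`, and `u, v` are independent random-edit vertices. -/
noncomputable def Delta (w : Set RTree → ℝ) (Ti Tj : RTree) (τ : ℕ → RTree)
    (H : ℕ) (ρ : ℝ) (x : List ℕ) : ℝ :=
  editExp2 Ti Tj H ρ (fun u v =>
    kernel w (edit Ti x τ) (edit Ti u τ) - kernel w (edit Ti x τ) (edit Tj v τ))

/-- `B_{u,v}`. -/
def Bset (T : RTree) (u v : List ℕ) : Set (List ℕ) :=
  if u = v then insert u (des T u) else fam T u ∪ fam T v

end RTree
namespace RTree

lemma subAt_nil (t : RTree) : t.subAt [] = some t := by simp [subAt]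

lemma subAt_cons (t : RTree) (i : ℕ) (p : List ℕ) :
    t.subAt (i :: p) = match (children t)[i]? with
      | some c => c.subAt p
      | none => none := by
  rw [subAt]

lemma isVertex_nil (t : RTree) : t.IsVertex [] := by
  simp [IsVertex, subAt_nil]

lemma isVertex_cons (t : RTree) (i : ℕ) (p : List ℕ) :
    t.IsVertex (i :: p) ↔ ∃ c, (children t)[i]? = some c ∧ c.IsVertex p := by
  unfold IsVertex
  rw [subAt_cons]
  cases h : (children t)[i]? with
  | none => simp
  | some c => simp [h]

lemma subAt_append (t : RTree) (p q : List ℕ) :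
    t.subAt (p ++ q) = (t.subAt p).bind (fun s => s.subAt q) := by
  induction p generalizing t with
  | nil => simp [subAt_nil]
  | cons i p ih =>
      rw [List.cons_append, subAt_cons, subAt_cons]
      cases h : (children t)[i]? with
      | none => simp
      | some c => simp [ih c]

lemma isoClass_eq_iff {s t : RTree} (h : isoClass s = isoClass t) : s.Iso t := by
  have : t ∈ isoClass t := ⟨id, id, fun p hp => hp, fun q hq => hq,
    fun p _ => rfl, fun q _ => rfl, fun p i _ => ⟨i, rfl⟩⟩
  rw [← h] at this
  exact this

lemma iso_refl (t : RTree) : t.Iso t :=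
  ⟨id, id, fun p hp => hp, fun q hq => hq, fun p _ => rfl, fun q _ => rfl,
    fun p i _ => ⟨i, rfl⟩⟩

lemma isVertex_leafTree {q : List ℕ} (h : (node []).IsVertex q) : q = [] := by
  cases q with
  | nil => rfl
  | cons i p =>
      exfalso
      rcases (isVertex_cons _ _ _).1 h with ⟨c, hc, _⟩
      simp [children] at hc

lemma eq_leafTree_of_iso {s : RTree} (h : (node []).Iso s) : s = node [] := by
  obtain ⟨cs⟩ := s
  cases cs with
  | nil => rfl
  | cons c cs' =>
      exfalso
      obtain ⟨f, g, hf, hg, hgf, hfg, _⟩ := h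
      have hv0 : (node (c :: cs')).IsVertex [0] :=
        (isVertex_cons _ _ _).2 ⟨c, by simp [children], isVertex_nil c⟩
      have h1 : g [0] = [] := isVertex_leafTree (hg _ hv0)
      have h2 : g [] = [] := isVertex_leafTree (hg _ (isVertex_nil _))
      have e1 : f (g [0]) = [0] := hfg _ hv0
      have e2 : f (g []) = [] := hfg _ (isVertex_nil _)
      rw [h1] at e1; rw [h2] at e2; rw [e1] at e2
      exact List.cons_ne_nil 0 [] e2

lemma subtreeAt_leaf {t : RTree} {p : List ℕ} (h : t.IsLeafAt p) :
    t.subtreeAt p = node [] := by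
  obtain ⟨hv, hnv⟩ := h
  unfold IsVertex at hv hnv
  cases hs : t.subAt p with
  | none => exact absurd hs hv
  | some s =>
      have : s.subAt [0] = none := by
        have := hnv
        rw [subAt_append, hs] at this
        simpa using not_not.1 this
      rw [subAt_cons] at this
      obtain ⟨cs⟩ := s
      cases cs with
      | nil => simp [subtreeAt, hs]
      | cons c cs' => simp [children, subAt_nil] at this
  
lemma isLeafAt_iff {t : RTree} {p : List ℕ} :
    t.IsLeafAt p ↔ t.IsVertex p ∧ t.subtreeAt p = node [] := by
  constructor
  · intro h; exact ⟨h.1, subtreeAt_leaf h⟩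
  · rintro ⟨hv, hs⟩
    refine ⟨hv, ?_⟩
    unfold IsVertex at hv ⊢
    cases hq : t.subAt p with
    | none => exact absurd hq hv
    | some s =>
        have hs' : s = node [] := by simpa [subtreeAt, hq] using hs
        rw [not_not, subAt_append, hq, hs']
        simp [subAt_cons, children]

/-- every tree has a leaf -/
lemma exists_leaf (t : RTree) : ∃ p, t.IsLeafAt p := by
  suffices h : ∀ n (t : RTree), sizeOf t ≤ n → ∃ p, t.IsLeafAt p from h _ t le_rfl
  intro n
  induction n with
  | zero => intro t ht; obtain ⟨cs⟩ := t; simp only [node.sizeOf_spec] at ht; omega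
  | succ n ih =>
      rintro ⟨cs⟩ ht
      cases cs with
      | nil =>
          refine ⟨[], isVertex_nil _, ?_⟩
          simp only [List.nil_append, IsVertex, not_not, subAt_cons, children]
          rfl
      | cons c cs' =>
          have hc : sizeOf c ≤ n := by
            have h1 := List.sizeOf_lt_of_mem (List.mem_cons_self (a := c) (l := cs'))
            simp only [node.sizeOf_spec] at ht; omega
          obtain ⟨p, hp1, hp2⟩ := ih c hc
          refine ⟨0 :: p, ?_, ?_⟩
          · exact (isVertex_cons _ _ _).2 ⟨c, by simp [children], hp1⟩
          · intro hcon
            rcases (isVertex_cons _ _ _).1 hcon with ⟨c', hc', hv'⟩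
            simp [children] at hc'
            exact hp2 (hc' ▸ hv')

lemma finite_vertexSet (t : RTree) : {p : List ℕ | t.IsVertex p}.Finite := by
  suffices h : ∀ n (t : RTree), sizeOf t ≤ n → {p : List ℕ | t.IsVertex p}.Finite from
    h _ t le_rfl
  intro n
  induction n with
  | zero => intro t ht; obtain ⟨cs⟩ := t; simp only [node.sizeOf_spec] at ht; omega
  | succ n ih =>
      rintro ⟨cs⟩ ht
      have hsub : {p : List ℕ | (node cs).IsVertex p} ⊆
          insert [] (⋃ c ∈ {c | c ∈ cs}, ⋃ i ∈ Finset.range cs.length,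
            (i :: ·) '' {p : List ℕ | c.IsVertex p}) := by
        rintro (_ | ⟨i, p⟩) hp
        · exact Set.mem_insert _ _
        · rcases (isVertex_cons _ _ _).1 hp with ⟨c, hc, hv⟩
          have hmem : c ∈ cs := by
            have := List.getElem?_eq_some_iff.1 (by simpa [children] using hc)
            rcases this with ⟨hlt, he⟩
            exact he ▸ List.getElem_mem hlt
          have hlt : i < cs.length := by
            have := List.getElem?_eq_some_iff.1 (by simpa [children] using hc)
            exact this.1
          refine Set.mem_insert_iff.2 (Or.inr ?_)
          refine Set.mem_biUnion hmem (Set.mem_biUnion (Finset.mem_range.2 hlt) ?_)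
          exact ⟨p, hv, rfl⟩
      refine Set.Finite.subset (Set.Finite.insert _ ?_) hsub
      refine Set.Finite.biUnion (List.finite_toSet cs) (fun c hc => ?_)
      refine Set.Finite.biUnion (Finset.range cs.length).finite_toSet (fun i _ => ?_)
      refine Set.Finite.image _ (ih c ?_)
      have h1 := List.sizeOf_lt_of_mem hc
      simp only [node.sizeOf_spec] at ht; omega

lemma finite_classes (T : RTree) : (classes T).Finite := by
  have : classes T ⊆ (fun p => isoClass (T.subtreeAt p)) '' {p | T.IsVertex p} := by
    rintro C ⟨p, hp, rfl⟩
    exact ⟨p, hp, rfl⟩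
  exact Set.Finite.subset ((finite_vertexSet T).image _) this

lemma leafClass_mem_classes (T : RTree) : leafClass ∈ classes T := by
  obtain ⟨p, hp⟩ := exists_leaf T
  exact ⟨p, hp.1, by rw [subtreeAt_leaf hp]; rfl⟩

lemma classCount_leafClass (T : RTree) : classCount leafClass T = leafCount T := by
  unfold classCount leafCount
  congr 1
  ext p
  simp only [Set.mem_setOf_eq]
  constructor
  · rintro ⟨hv, hcl⟩
    refine isLeafAt_iff.2 ⟨hv, ?_⟩
    exact eq_leafTree_of_iso (isoClass_eq_iff hcl.symm)
  · intro h
    exact ⟨h.1, by rw [subtreeAt_leaf h]; rfl⟩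

end RTree

open RTree in
/-- If `T0` and `T1` satisfy (C1) and (C2), then
`K(T0,T1) = w_• · #leaves(T0) · #leaves(T1)`; moreover this is the minimal possible value
of the kernel: for any rooted trees `S, T`, `K(S,T) ≥ w_• · #leaves(S) · #leaves(T)`. -/
theorem statement0 (w : Set RTree → ℝ) (hw : ∀ C, 0 ≤ w C)
    (T0 T1 : RTree) (hC1₀ : CondOne T0) (hC1₁ : CondOne T1) (hC2 : CondTwo T0 T1) :
    kernel w T0 T1 = w leafClass * (leafCount T0 : ℝ) * (leafCount T1 : ℝ) ∧
    ∀ S T : RTree,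
      w leafClass * (leafCount S : ℝ) * (leafCount T : ℝ) ≤ kernel w S T := by
  constructor
  · have hsing : classes T0 ∩ classes T1 = {leafClass} := by
      apply Set.eq_singleton_iff_unique_mem.2
      refine ⟨⟨leafClass_mem_classes T0, leafClass_mem_classes T1⟩, ?_⟩
      rintro C ⟨⟨p, hp, rfl⟩, ⟨q, hq, hCq⟩⟩
      by_cases hlp : T0.IsLeafAt p
      · rw [subtreeAt_leaf hlp]; rfl
      by_cases hlq : T1.IsLeafAt q
      · rw [hCq, subtreeAt_leaf hlq]; rfl
      exact absurd (isoClass_eq_iff hCq) (hC2 p q hp hq hlp hlq)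
    have hmem : leafClass ∈ classes T0 ∩ classes T1 := by
      rw [hsing]; exact Set.mem_singleton _
    unfold kernel
    rw [tsum_eq_single (⟨leafClass, hmem⟩ : ↥(classes T0 ∩ classes T1)) ?_]
    · simp only [classCount_leafClass]
    · intro b hb
      exfalso; apply hb; apply Subtype.ext
      exact Set.mem_singleton_iff.1 (hsing.le b.2)
  · intro S T
    have hfin : (classes S ∩ classes T).Finite :=
      (finite_classes S).subset Set.inter_subset_left
    haveI := hfin.to_subtype
    have hb : leafClass ∈ classes S ∩ classes T :=
      ⟨leafClass_mem_classes S, leafClass_mem_classes T⟩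
    have hle := Summable.le_tsum (L := SummationFilter.unconditional _) (f := fun C : ↥(classes S ∩ classes T) =>
        w (C : Set RTree) * (classCount (C : Set RTree) S : ℝ) *
          (classCount (C : Set RTree) T : ℝ))
      Summable.of_finite ⟨leafClass, hb⟩
      (fun b _ => mul_nonneg (mul_nonneg (hw _) (Nat.cast_nonneg _)) (Nat.cast_nonneg _))
    simp only [classCount_leafClass] at hle; exact hle
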